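/- Let R be a commutative ring, M an R-module, and p a prime number such that multiplication by p is injective on M. Then both (p, XY − p) and (XY − p, p) are weakly regular sequences on the module M[X,Y] of polynomials in two variables X, Y with coefficients in M, viewed as a module over R[X,Y] = R[X][Y] (realized as PolynomialModule (R[X]) (PolynomialModule R M)). -/

import Mathlib

open Polynomial

open scoped Pointwise

section Aux

variable {A : Type*} [CommRing A] {B : Type*} [AddCommGroup B] [Module A B]

lemma csmul (a : A) (v : PolynomialModule A B) (n : ℕ) :
    ((Polynomial.C a) • v).coeff n = a • v.coeff n := by
  rw [← Polynomial.monomial_zero_left, PolynomialModule.monomial_smul_apply]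
  simp

lemma natcast_smul_apply (q : ℕ) (v : PolynomialModule A B) (n : ℕ) :
    ((q : A[X]) • v).coeff n = (q : A) • v.coeff n := by
  rw [← Polynomial.C_eq_natCast, csmul]

lemma mem_psmul_iff {α : Type*} [Monoid α] {R M : Type*} [Semiring R] [AddCommMonoid M]
    [Module R M] [DistribMulAction α M] [SMulCommClass α R M]
    {a : α} {S : Submodule R M} {x : M} : x ∈ a • S ↔ ∃ y ∈ S, a • y = x := by
  rw [← SetLike.mem_coe, Submodule.coe_pointwise_smul]
  exact Set.mem_smul_set

lemma mem_smul_of_coeff (a : A) (v : PolynomialModule A B)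
    (h : ∀ k, v.coeff k ∈ a • (⊤ : Submodule A B)) :
    v ∈ Polynomial.C a • (⊤ : Submodule A[X] (PolynomialModule A B)) := by
  cases v with | ofCoeff v => ?_
  simp only [PolynomialModule.coeff_ofCoeff] at h
  induction v using Finsupp.induction with
  | zero => exact Submodule.zero_mem _
  | single_add i b f hif hb ih =>
    have hf : ∀ k, f k ∈ a • (⊤ : Submodule A B) := by
      intro k
      by_cases hk : k = i
      · subst hk
        rw [Finsupp.notMem_support_iff.mp hif]
        exact Submodule.zero_mem _
      · have := h k
        rwa [Finsupp.add_apply, Finsupp.single_apply, if_neg (fun h' => hk h'.symm),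
          zero_add] at this
    have hb' : b ∈ a • (⊤ : Submodule A B) := by
      have := h i
      rwa [Finsupp.add_apply, Finsupp.notMem_support_iff.mp hif, add_zero,
        Finsupp.single_apply, if_pos rfl] at this
    obtain ⟨m, -, rfl⟩ := mem_psmul_iff.mp hb'
    rw [PolynomialModule.ofCoeff_add]
    refine Submodule.add_mem _ ?_ (ih hf)
    have e1 : Polynomial.C a • (PolynomialModule.single A i m)
        = PolynomialModule.ofCoeff A (Finsupp.single i (a • m)) := by
      rw [← Polynomial.algebraMap_eq, algebraMap_smul, ← PolynomialModule.single_smul]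
      rfl
    rw [← e1]
    exact Submodule.smul_mem_pointwise_smul _ _ _ Submodule.mem_top

lemma reg_cast (q : ℕ) (h : IsSMulRegular B (q : A)) :
    IsSMulRegular (PolynomialModule A B) ((q : A[X])) := by
  intro u v huv
  refine PolynomialModule.ext (Finsupp.ext fun k => h ?_)
  have huv' : (q : A[X]) • u = (q : A[X]) • v := huv
  have := DFunLike.congr_fun (congrArg PolynomialModule.coeff huv') k
  rwa [natcast_smul_apply, natcast_smul_apply] at this

lemma xsmul_apply (u : PolynomialModule A B) (k : ℕ) :
    ((Polynomial.X : A[X]) • u).coeff k = if 1 ≤ k then u.coeff (k - 1) else 0 := by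
  rw [← Polynomial.monomial_one_one_eq_X, PolynomialModule.monomial_smul_apply]
  simp

end Aux


/-- Let `R` be a commutative ring, `M` an `R`-module, and `p` a prime number
such that multiplication by `p` is injective on `M`. Then both `(p, XY − p)` and `(XY − p, p)`
are weakly regular sequences on the module `M[X,Y]` of polynomials in two variables over `M`,
realized as `PolynomialModule (R[X]) (PolynomialModule R M)`, a module over
`R[X][Y] = Polynomial (Polynomial R)`.  Here the inner variable `X` of `R[X][Y]` is
`Polynomial.C Polynomial.X` and the outer variable `Y` is `Polynomial.X`. -/
theorem stmt_2 (R : Type) [CommRing R] (M : Type) [AddCommGroup M] [Module R M]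
    (p : ℕ) (hp : p.Prime) (hpM : IsSMulRegular M (p : R)) :
    RingTheory.Sequence.IsWeaklyRegular (PolynomialModule R[X] (PolynomialModule R M))
      [(p : R[X][X]), Polynomial.C Polynomial.X * Polynomial.X - (p : R[X][X])] ∧
      RingTheory.Sequence.IsWeaklyRegular (PolynomialModule R[X] (PolynomialModule R M))
        [Polynomial.C Polynomial.X * Polynomial.X - (p : R[X][X]), (p : R[X][X])] := by
  classical
  set N := PolynomialModule R[X] (PolynomialModule R M) with hN
  have hPreg : IsSMulRegular (PolynomialModule R M) ((p : R[X])) := reg_cast p hpM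
  have hNreg : IsSMulRegular N ((p : R[X][X])) := reg_cast p hPreg
  have hxy : ∀ (f : N) (n : ℕ),
      ((Polynomial.C Polynomial.X * Polynomial.X : R[X][X]) • f).coeff n =
        if 1 ≤ n then (Polynomial.X : R[X]) • f.coeff (n - 1) else 0 := by
    intro f n
    rw [Polynomial.C_mul_X_eq_monomial, PolynomialModule.monomial_smul_apply]
  -- membership in p • ⊤ from coefficients
  have memN : ∀ f : N, (∀ n k, (f.coeff n).coeff k ∈ (p : R) • (⊤ : Submodule R M)) →
      f ∈ (p : R[X][X]) • (⊤ : Submodule R[X][X] N) := by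
    intro f h
    rw [← Polynomial.C_eq_natCast]
    refine mem_smul_of_coeff _ _ (fun n => ?_)
    rw [← Polynomial.C_eq_natCast]
    exact mem_smul_of_coeff _ _ (h n)
  -- XY - p is regular on N
  have hregXY : IsSMulRegular N
      (Polynomial.C Polynomial.X * Polynomial.X - (p : R[X][X])) := by
    intro u v huv
    have huv' : (Polynomial.C Polynomial.X * Polynomial.X - (p : R[X][X])) • u
        = (Polynomial.C Polynomial.X * Polynomial.X - (p : R[X][X])) • v := huv
    rw [← sub_eq_zero]
    have h0 : (Polynomial.C Polynomial.X * Polynomial.X - (p : R[X][X])) • (u - v) = 0 := by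
      rw [smul_sub, huv', sub_self]
    set d := u - v with hd
    have hd' : ∀ n, ((Polynomial.C Polynomial.X * Polynomial.X : R[X][X]) • d).coeff n
        = ((p : R[X][X]) • d).coeff n := by
      intro n
      have : (Polynomial.C Polynomial.X * Polynomial.X : R[X][X]) • d
          = (p : R[X][X]) • d := by
        rw [← sub_eq_zero, ← sub_smul]
        exact h0
      rw [this]
    have key : ∀ n, d.coeff n = 0 := by
      intro n
      induction n with
      | zero =>
        apply hPreg
        show ((p : ℕ) : R[X]) • d.coeff 0 = ((p : ℕ) : R[X]) • (0 : PolynomialModule R M)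
        rw [smul_zero, ← natcast_smul_apply, ← hd' 0, hxy]
        simp
      | succ m ih =>
        apply hPreg
        show ((p : ℕ) : R[X]) • d.coeff (m + 1) = ((p : ℕ) : R[X]) • (0 : PolynomialModule R M)
        rw [smul_zero, ← natcast_smul_apply, ← hd' (m + 1), hxy]
        simp [ih]
    exact PolynomialModule.ext (Finsupp.ext key)
  -- XY - p regular on N / pN
  have hquot1 : IsSMulRegular (QuotSMulTop ((p : R[X][X])) N)
      (Polynomial.C Polynomial.X * Polynomial.X - (p : R[X][X])) := by
    rw [isSMulRegular_quotient_iff_mem_of_smul_mem]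
    intro f hf
    obtain ⟨g, -, hg⟩ := mem_psmul_iff.mp hf
    have e : (Polynomial.C Polynomial.X * Polynomial.X : R[X][X]) • f
        = (p : R[X][X]) • (g + f) := by
      rw [sub_smul] at hg
      rw [smul_add]
      exact sub_eq_iff_eq_add.mp hg.symm
    refine memN f (fun n k => ?_)
    refine mem_psmul_iff.mpr ⟨((g + f).coeff (n + 1)).coeff (k + 1), Submodule.mem_top, ?_⟩
    have e1 := DFunLike.congr_fun (congrArg PolynomialModule.coeff (DFunLike.congr_fun (congrArg PolynomialModule.coeff e) (n + 1))) (k + 1)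
    rw [hxy] at e1
    simp only [Nat.le_add_left, if_true, Nat.add_sub_cancel] at e1
    rw [xsmul_apply] at e1
    simp only [Nat.le_add_left, if_true, Nat.add_sub_cancel] at e1
    rw [natcast_smul_apply, natcast_smul_apply] at e1
    exact e1.symm
  -- p regular on N / (XY - p) N
  have hquot2 : IsSMulRegular
      (QuotSMulTop (Polynomial.C Polynomial.X * Polynomial.X - (p : R[X][X])) N)
      ((p : R[X][X])) := by
    rw [isSMulRegular_quotient_iff_mem_of_smul_mem]
    intro f hf
    obtain ⟨g, -, hg⟩ := mem_psmul_iff.mp hf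
    have e : (Polynomial.C Polynomial.X * Polynomial.X : R[X][X]) • g
        = (p : R[X][X]) • (f + g) := by
      rw [sub_smul] at hg
      rw [smul_add]
      exact sub_eq_iff_eq_add.mp hg
    have hgmem : g ∈ (p : R[X][X]) • (⊤ : Submodule R[X][X] N) := by
      refine memN g (fun n k => ?_)
      refine mem_psmul_iff.mpr ⟨((f + g).coeff (n + 1)).coeff (k + 1), Submodule.mem_top, ?_⟩
      have e1 := DFunLike.congr_fun (congrArg PolynomialModule.coeff (DFunLike.congr_fun (congrArg PolynomialModule.coeff e) (n + 1))) (k + 1)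
      rw [hxy] at e1
      simp only [Nat.le_add_left, if_true, Nat.add_sub_cancel] at e1
      rw [xsmul_apply] at e1
      simp only [Nat.le_add_left, if_true, Nat.add_sub_cancel] at e1
      rw [natcast_smul_apply, natcast_smul_apply] at e1
      exact e1.symm
    obtain ⟨h', -, hh'⟩ := mem_psmul_iff.mp hgmem
    have : (Polynomial.C Polynomial.X * Polynomial.X - (p : R[X][X])) • h' = f := by
      apply hNreg
      show (p : R[X][X]) • _ = (p : R[X][X]) • f
      rw [smul_comm, hh', hg]
    exact mem_psmul_iff.mpr ⟨h', Submodule.mem_top, this⟩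
  exact ⟨RingTheory.Sequence.IsWeaklyRegular.cons hNreg
      (RingTheory.Sequence.IsWeaklyRegular.cons hquot1
        (RingTheory.Sequence.IsWeaklyRegular.nil _ _)),
    RingTheory.Sequence.IsWeaklyRegular.cons hregXY
      (RingTheory.Sequence.IsWeaklyRegular.cons hquot2
        (RingTheory.Sequence.IsWeaklyRegular.nil _ _))⟩
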